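/- For R ∈ C with Re(R) = 0, the matrix A of the previous statement has eigenvalue ±√(2(|R|)) each with algebraic multiplicity 2 and 0 is not an eigenvalue unless R = 0; in particular the characteristic polynomial is (t² - 2|R|)², so A is not diagonalisable with four distinct eigenvalues, reflecting that one of the two PSL(2,R) holonomies is parabolic. -/

import Mathlib

open Polynomial Matrix

private lemma key10 (u v : ℂ) (h : u^2 = -(v^2)) :
    (!![(0:ℂ), 0, u, v; 0, 0, -u, v; -u, u, 0, 0; v, v, 0, 0]).charpoly
      = (X^2 - C (2*v^2))^2 := by
  rw [Matrix.charpoly]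
  simp [charmatrix_apply, Matrix.det_succ_row_zero, Fin.sum_univ_succ,
    Matrix.diagonal_apply, Fin.succAbove]
  have h' : (C u)^2 = -((C v)^2) := by rw [← map_pow, ← map_pow, h, map_neg]
  have hC2 : (C (2:ℂ) : ℂ[X]) = 2 := map_ofNat C 2
  linear_combination (2*X^2 - 4*(C v)^2)*h' +
    ((C v)^2*(2*X^2 - 2*(C v)^2 - C 2 * (C v)^2))*hC2

theorem stmt10 (R : ℂ) (hR : R ≠ 0) (hre : R.re = 0) :
    let s : ℂ := ((Real.sqrt (‖R‖) : ℝ) : ℂ)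
    let A : Matrix (Fin 4) (Fin 4) ℂ :=
      !![0, 0, -(starRingEnd ℂ) R / s, s;
         0, 0, -R / s, s;
         -R / s, -(starRingEnd ℂ) R / s, 0, 0;
         s, s, 0, 0]
    A.charpoly = (X ^ 2 - C ((2 * ‖R‖ : ℝ) : ℂ)) ^ 2 ∧
    A.charpoly.rootMultiplicity ((Real.sqrt (2 * ‖R‖) : ℝ) : ℂ) = 2 ∧
    A.charpoly.rootMultiplicity (-((Real.sqrt (2 * ‖R‖) : ℝ) : ℂ)) = 2 ∧
    ¬ A.charpoly.IsRoot 0 := by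
  intro s A
  have habs : (0:ℝ) < ‖R‖ := norm_pos_iff.mpr hR
  have h0 : ((‖R‖ : ℝ) : ℂ) ≠ 0 := by exact_mod_cast habs.ne'
  have hconj : (starRingEnd ℂ) R = -R := by apply Complex.ext <;> simp [hre]
  have hs2 : s^2 = ((‖R‖ : ℝ) : ℂ) := by
    rw [← Complex.ofReal_pow, Real.sq_sqrt habs.le]
  have hs0 : s ≠ 0 := by
    simp only [s, ne_eq, Complex.ofReal_eq_zero]
    exact (Real.sqrt_pos.mpr habs).ne'
  have hR2 : R^2 = -(((‖R‖ : ℝ) : ℂ))^2 := by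
    have h1 := Complex.mul_conj R
    rw [hconj, ← Complex.sq_norm] at h1
    push_cast at h1
    linear_combination -h1
  have hu2 : (R/s)^2 = -(s^2) := by
    rw [div_pow, hs2, hR2, neg_div, pow_two, mul_div_assoc, div_self h0, mul_one]
  have hA : A = !![(0:ℂ), 0, R/s, s; 0, 0, -(R/s), s; -(R/s), R/s, 0, 0; s, s, 0, 0] := by
    simp [A, hconj, neg_div]
  have hcast : C ((2 * ‖R‖ : ℝ) : ℂ) = C (2*s^2) := by
    rw [hs2]; push_cast; ring_nf
  have hcp' : A.charpoly = (X ^ 2 - C ((2 * ‖R‖ : ℝ) : ℂ)) ^ 2 := by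
    rw [hA, key10 _ _ hu2, hcast]
  have h2abs : (0:ℝ) < 2 * ‖R‖ := by positivity
  set q : ℂ := ((Real.sqrt (2 * ‖R‖) : ℝ) : ℂ) with hqdef
  have hq2 : q^2 = ((2 * ‖R‖ : ℝ) : ℂ) := by
    rw [hqdef, ← Complex.ofReal_pow, Real.sq_sqrt h2abs.le]
  have hq0 : q ≠ 0 := by
    rw [hqdef, ne_eq, Complex.ofReal_eq_zero]
    exact (Real.sqrt_pos.mpr h2abs).ne'
  have hfac : A.charpoly = (X - C q)^2 * (X - C (-q))^2 := by
    rw [hcp', ← hq2, map_neg, map_pow]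
    ring
  have hne1 : ((X - C q)^2 : ℂ[X]) ≠ 0 := pow_ne_zero _ (X_sub_C_ne_zero q)
  have hne2 : ((X - C (-q))^2 : ℂ[X]) ≠ 0 := pow_ne_zero _ (X_sub_C_ne_zero (-q))
  refine ⟨hcp', ?_, ?_, ?_⟩
  · rw [hfac, Polynomial.rootMultiplicity_mul (mul_ne_zero hne1 hne2),
      Polynomial.rootMultiplicity_X_sub_C_pow,
      Polynomial.rootMultiplicity_eq_zero]
    · intro h
      simp [Polynomial.IsRoot, sub_eq_zero] at h
      exact hq0 h
  · rw [hfac, Polynomial.rootMultiplicity_mul (mul_ne_zero hne1 hne2),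
      Polynomial.rootMultiplicity_X_sub_C_pow,
      Polynomial.rootMultiplicity_eq_zero]
    · intro h
      simp [Polynomial.IsRoot, sub_eq_zero] at h
      exact hq0 (by linear_combination -h/2)
  · rw [hcp']
    intro hh
    simp [Polynomial.IsRoot] at hh
    exact hR hh
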